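/- The derivative of the entropic OT loss strictly dominates that of the negative log-likelihood on the negative half-line: if α* > 1/2, then for every θ < 0 and every a ∈ (0,1) with G(θ, a) = α*, one has F(θ, a) > F(θ, α*). (Since 𝓛'(θ) = F(θ, a(θ)) - θ and ℓ'(θ) = F(θ, α*) - θ, this says 𝓛'(θ) > ℓ'(θ) for all θ < 0.) -/

import Mathlib

open MeasureTheory

/-- The standard Gaussian density. -/
noncomputable def stdGauss (y : ℝ) : ℝ :=
  (Real.sqrt (2 * Real.pi))⁻¹ * Real.exp (-y ^ 2 / 2)

/-- Density of the two-component mixture `α*·N(θ*,1) + (1-α*)·N(-θ*,1)`. -/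
noncomputable def mixDen (θs αs y : ℝ) : ℝ :=
  αs * stdGauss (y - θs) + (1 - αs) * stdGauss (y + θs)

/-- The EM/Sinkhorn-EM map `F(θ, α)`. -/
noncomputable def Fmap (θs αs θ α : ℝ) : ℝ :=
  ∫ y, y * (α * Real.exp (θ * y) - (1 - α) * Real.exp (-(θ * y))) /
      (α * Real.exp (θ * y) + (1 - α) * Real.exp (-(θ * y))) * mixDen θs αs y

/-- The tilting equation map `G(θ, α)`. -/
noncomputable def Gmap (θs αs θ α : ℝ) : ℝ :=
  ∫ y, α * Real.exp (θ * y) /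
      (α * Real.exp (θ * y) + (1 - α) * Real.exp (-(θ * y))) * mixDen θs αs y

/-- The (normalized) `θ`-derivative of the tilting equation, `G_θ(θ, α)`. -/
noncomputable def Gtheta (θs αs θ α : ℝ) : ℝ :=
  ∫ y, y / (α * Real.exp (θ * y) + (1 - α) * Real.exp (-(θ * y))) ^ 2 * mixDen θs αs y

open Set

lemma stdGauss_pos (y : ℝ) : 0 < stdGauss y := by
  unfold stdGauss
  have : (0:ℝ) < Real.sqrt (2 * Real.pi) :=
    Real.sqrt_pos.2 (by positivity)
  positivity

lemma continuous_stdGauss : Continuous stdGauss := by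
  unfold stdGauss; fun_prop

lemma stdGauss_neg (y : ℝ) : stdGauss (-y) = stdGauss y := by
  simp [stdGauss, neg_sq]

lemma stdGauss_lt {a b : ℝ} (h : a ^ 2 < b ^ 2) : stdGauss b < stdGauss a := by
  unfold stdGauss
  have h0 : (0:ℝ) < (Real.sqrt (2 * Real.pi))⁻¹ := by
    have : (0:ℝ) < Real.sqrt (2 * Real.pi) := Real.sqrt_pos.2 (by positivity)
    positivity
  exact mul_lt_mul_of_pos_left (Real.exp_lt_exp.2 (by linarith)) h0

lemma exp_half (y : ℝ) : -(1/2 : ℝ) * y ^ 2 = -y ^ 2 / 2 := by ring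

lemma integrable_stdGauss : Integrable stdGauss := by
  have h := (integrable_exp_neg_mul_sq (by norm_num : (0:ℝ) < 1/2)).const_mul
    ((Real.sqrt (2 * Real.pi))⁻¹)
  simp only [exp_half] at h
  unfold stdGauss
  exact h

lemma integrable_abs_stdGauss : Integrable (fun y : ℝ => |y| * stdGauss y) := by
  have h := (integrable_rpow_mul_exp_neg_mul_sq (by norm_num : (0:ℝ) < 1/2)
      (by norm_num : (-1:ℝ) < 1)).abs
  refine (h.const_mul ((Real.sqrt (2 * Real.pi))⁻¹)).congr
    (Filter.Eventually.of_forall fun y => ?_)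
  show (Real.sqrt (2 * Real.pi))⁻¹ * |y ^ (1:ℝ) * Real.exp (-(1/2) * y ^ 2)| = _
  unfold stdGauss
  rw [Real.rpow_one, abs_mul, abs_of_pos (Real.exp_pos _), exp_half]
  ring

lemma integrable_stdGauss_shift (c : ℝ) : Integrable (fun y => stdGauss (y - c)) :=
  integrable_stdGauss.comp_sub_right c

lemma integrable_abs_stdGauss_shift (c : ℝ) :
    Integrable (fun y => |y| * stdGauss (y - c)) := by
  have h2 : Integrable (fun y => |y - c| * stdGauss (y - c)) :=
    integrable_abs_stdGauss.comp_sub_right c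
  have h3 : Integrable (fun y => |c| * stdGauss (y - c)) :=
    (integrable_stdGauss_shift c).const_mul _
  refine (h2.add h3).mono' ?_ (Filter.Eventually.of_forall fun y => ?_)
  · exact (continuous_abs.mul
      (continuous_stdGauss.comp (continuous_id.sub continuous_const))).aestronglyMeasurable
  · rw [Real.norm_eq_abs, abs_mul, abs_abs, abs_of_pos (stdGauss_pos _)]
    have hy : |y| ≤ |y - c| + |c| := by
      calc |y| = |(y - c) + c| := by congr 1; ring
      _ ≤ |y - c| + |c| := abs_add_le _ _
    have := mul_le_mul_of_nonneg_right hy (stdGauss_pos (y - c)).le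
    simp only [Pi.add_apply]
    linarith [this]

lemma integral_stdGauss : ∫ y, stdGauss y = 1 := by
  unfold stdGauss
  rw [integral_const_mul]
  have h : ∫ y : ℝ, Real.exp (-y ^ 2 / 2) = Real.sqrt (2 * Real.pi) := by
    have := integral_gaussian (1/2 : ℝ)
    simp only [exp_half] at this
    rw [this, show Real.pi / (1/2 : ℝ) = 2 * Real.pi by ring]
  rw [h]
  have : (0:ℝ) < Real.sqrt (2 * Real.pi) := Real.sqrt_pos.2 (by positivity)
  field_simp

section MixDen
variable {θs αs : ℝ}

lemma mixDen_pos (h0 : 0 < αs) (h1 : αs < 1) (y : ℝ) : 0 < mixDen θs αs y :=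
  add_pos (mul_pos h0 (stdGauss_pos _)) (mul_pos (by linarith) (stdGauss_pos _))

lemma continuous_mixDen : Continuous (mixDen θs αs) := by
  unfold mixDen
  exact (continuous_const.mul
      (continuous_stdGauss.comp (continuous_id.sub continuous_const))).add
    (continuous_const.mul (continuous_stdGauss.comp (continuous_id.add continuous_const)))

lemma integrable_mixDen : Integrable (mixDen θs αs) := by
  unfold mixDen
  have h2 : Integrable (fun y => stdGauss (y + θs)) := by
    have := integrable_stdGauss_shift (-θs)
    simpa [sub_neg_eq_add] using this
  exact ((integrable_stdGauss_shift θs).const_mul _).add (h2.const_mul _)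

lemma integrable_abs_mixDen : Integrable (fun y => |y| * mixDen θs αs y) := by
  have h2 : Integrable (fun y => |y| * stdGauss (y + θs)) := by
    have := integrable_abs_stdGauss_shift (-θs)
    simpa [sub_neg_eq_add] using this
  refine (((integrable_abs_stdGauss_shift θs).const_mul αs).add
    (h2.const_mul (1 - αs))).congr (Filter.Eventually.of_forall fun y => ?_)
  simp only [Pi.add_apply]
  unfold mixDen; ring

lemma integral_mixDen : ∫ y, mixDen θs αs y = 1 := by
  unfold mixDen
  have h2 : Integrable (fun y => stdGauss (y + θs)) := by
    have := integrable_stdGauss_shift (-θs)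
    simpa [sub_neg_eq_add] using this
  rw [integral_add (((integrable_stdGauss_shift θs)).const_mul _) (h2.const_mul _),
    integral_const_mul, integral_const_mul]
  have e1 : ∫ y, stdGauss (y - θs) = 1 := by
    rw [integral_sub_right_eq_self (f := stdGauss) θs]; exact integral_stdGauss
  have e2 : ∫ y, stdGauss (y + θs) = 1 := by
    rw [integral_add_right_eq_self (f := stdGauss) θs]; exact integral_stdGauss
  rw [e1, e2]; ring

/-- master integrability 1 -/
lemma integrable_bdd_mul_mixDen (h0 : 0 < αs) (h1 : αs < 1)
    {h : ℝ → ℝ} (hc : Continuous h) {C : ℝ} (hb : ∀ y, |h y| ≤ C) :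
    Integrable (fun y => h y * mixDen θs αs y) := by
  refine Integrable.mono' ((integrable_mixDen (θs := θs) (αs := αs)).const_mul C)
    ((hc.mul continuous_mixDen).aestronglyMeasurable)
    (Filter.Eventually.of_forall fun y => ?_)
  rw [Real.norm_eq_abs, abs_mul, abs_of_pos (mixDen_pos h0 h1 y)]
  exact mul_le_mul_of_nonneg_right (hb y) (mixDen_pos h0 h1 y).le

/-- master integrability 2 -/
lemma integrable_mul_bdd_mul_mixDen (h0 : 0 < αs) (h1 : αs < 1)
    {h : ℝ → ℝ} (hc : Continuous h) {C : ℝ} (hb : ∀ y, |h y| ≤ C) :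
    Integrable (fun y => y * (h y * mixDen θs αs y)) := by
  refine Integrable.mono' ((integrable_abs_mixDen (θs := θs) (αs := αs)).const_mul C)
    ((continuous_id.mul (hc.mul continuous_mixDen)).aestronglyMeasurable)
    (Filter.Eventually.of_forall fun y => ?_)
  rw [Real.norm_eq_abs, abs_mul, abs_mul, abs_of_pos (mixDen_pos h0 h1 y)]
  have := mul_le_mul_of_nonneg_right (hb y) (mixDen_pos (θs := θs) h0 h1 y).le
  have h3 := mul_le_mul_of_nonneg_left this (abs_nonneg y)
  calc |y| * (|h y| * mixDen θs αs y) ≤ |y| * (C * mixDen θs αs y) := h3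
  _ = C * (|y| * mixDen θs αs y) := by ring

end MixDen

/-- symmetrization -/
lemma integral_sym {g : ℝ → ℝ} (hg : Integrable g) :
    ∫ y, g y = ∫ y in Ioi (0:ℝ), (g y + g (-y)) := by
  have hneg : Integrable (fun y => g (-y)) :=
    ((Measure.measurePreserving_neg (volume : Measure ℝ)).integrable_comp
      hg.aestronglyMeasurable).2 hg
  have h1 : (∫ y in Iic (0:ℝ), g y) + ∫ y in Ioi (0:ℝ), g y = ∫ y, g y :=
    intervalIntegral.integral_Iic_add_Ioi hg.integrableOn hg.integrableOn
  have h2 : ∫ y in Ioi (0:ℝ), g (-y) = ∫ y in Iic (0:ℝ), g y := by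
    rw [integral_comp_neg_Ioi (c := 0) (f := g), neg_zero]
  rw [integral_add hg.integrableOn hneg.integrableOn, h2]
  linarith

lemma integral_pos_of_sym {g : ℝ → ℝ} (hg : Integrable g)
    (hpos : ∀ y, 0 < y → 0 < g y + g (-y)) : 0 < ∫ y, g y := by
  have hneg : Integrable (fun y => g (-y)) :=
    ((Measure.measurePreserving_neg (volume : Measure ℝ)).integrable_comp
      hg.aestronglyMeasurable).2 hg
  rw [integral_sym hg]
  have hint : IntegrableOn (fun y => g y + g (-y)) (Ioi (0:ℝ)) :=
    (hg.add hneg).integrableOn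
  rw [setIntegral_pos_iff_support_of_nonneg_ae ?_ hint]
  · have hsub : Ioi (0:ℝ) ⊆ Function.support (fun y => g y + g (-y)) ∩ Ioi 0 :=
      fun y hy => ⟨ne_of_gt (hpos y hy), hy⟩
    refine lt_of_lt_of_le ?_ (measure_mono hsub)
    simp [Real.volume_Ioi]
  · exact (ae_restrict_iff' measurableSet_Ioi).2
      (Filter.Eventually.of_forall fun y hy => (hpos y hy).le)

lemma integral_pos_of_pos {g : ℝ → ℝ} (hg : Integrable g)
    (hpos : ∀ y, 0 < g y) : 0 < ∫ y, g y := by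
  rw [integral_pos_iff_support_of_nonneg (fun y => (hpos y).le) hg]
  refine lt_of_lt_of_le ?_ (measure_mono (fun y (_ : y ∈ Ioi (0:ℝ)) => ne_of_gt (hpos y)))
  simp [Real.volume_Ioi]

/-- denominator -/
noncomputable def DD (θ α y : ℝ) : ℝ :=
  α * Real.exp (θ * y) + (1 - α) * Real.exp (-(θ * y))

lemma DD_pos {α : ℝ} (h0 : 0 < α) (h1 : α < 1) (θ y : ℝ) : 0 < DD θ α y :=
  add_pos (mul_pos h0 (Real.exp_pos _)) (mul_pos (by linarith) (Real.exp_pos _))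

lemma continuous_DD (θ α : ℝ) : Continuous (DD θ α) := by
  unfold DD; fun_prop

lemma DD_ge {α : ℝ} (h0 : 0 < α) (h1 : α < 1) (θ y : ℝ) :
    2 * min α (1 - α) ≤ DD θ α y := by
  unfold DD
  have hE : 0 < Real.exp (θ * y) := Real.exp_pos _
  have hF : 0 < Real.exp (-(θ * y)) := Real.exp_pos _
  have hEF : Real.exp (θ * y) * Real.exp (-(θ * y)) = 1 := by
    rw [← Real.exp_add]; simp
  have h2 : 2 ≤ Real.exp (θ * y) + Real.exp (-(θ * y)) := by
    nlinarith [sq_nonneg (Real.exp (θ * y) - Real.exp (-(θ * y))), sq_nonneg (Real.exp (θ * y) - 1)]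
  have hm1 : min α (1 - α) ≤ α := min_le_left _ _
  have hm2 : min α (1 - α) ≤ 1 - α := min_le_right _ _
  have hm0 : 0 < min α (1 - α) := lt_min h0 (by linarith)
  nlinarith [mul_le_mul_of_nonneg_right hm1 hE.le, mul_le_mul_of_nonneg_right hm2 hF.le]

/-- |N| ≤ D -/
lemma abs_num_le_DD {α : ℝ} (h0 : 0 < α) (h1 : α < 1) (θ y : ℝ) :
    |α * Real.exp (θ * y) - (1 - α) * Real.exp (-(θ * y))| ≤ DD θ α y := by
  unfold DD
  have hE : 0 < Real.exp (θ * y) := Real.exp_pos _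
  have hF : 0 < Real.exp (-(θ * y)) := Real.exp_pos _
  rw [abs_le]
  constructor <;> nlinarith [mul_pos h0 hE, mul_pos (show (0:ℝ) < 1 - α by linarith) hF]

/-- |E - F| ≤ D / min -/
lemma abs_diff_le_DD {α : ℝ} (h0 : 0 < α) (h1 : α < 1) (θ y : ℝ) :
    |Real.exp (θ * y) - Real.exp (-(θ * y))| * min α (1 - α) ≤ DD θ α y := by
  unfold DD
  have hE : 0 < Real.exp (θ * y) := Real.exp_pos _
  have hF : 0 < Real.exp (-(θ * y)) := Real.exp_pos _
  have hm1 : min α (1 - α) ≤ α := min_le_left _ _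
  have hm2 : min α (1 - α) ≤ 1 - α := min_le_right _ _
  have hm0 : 0 < min α (1 - α) := lt_min h0 (by linarith)
  rcases le_total (Real.exp (θ * y)) (Real.exp (-(θ * y))) with h | h
  · rw [abs_of_nonpos (by linarith)]
    nlinarith [mul_le_mul_of_nonneg_right hm2 hF.le, mul_pos h0 hE]
  · rw [abs_of_nonneg (by linarith)]
    nlinarith [mul_le_mul_of_nonneg_right hm1 hE.le, mul_pos (show (0:ℝ) < 1 - α by linarith) hF]

/-- Pointwise G-integrand difference. -/
lemma G_int_diff {a b : ℝ} (ha0 : 0 < a) (ha1 : a < 1) (hb0 : 0 < b) (hb1 : b < 1)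
    (θ y : ℝ) :
    a * Real.exp (θ * y) / DD θ a y - b * Real.exp (θ * y) / DD θ b y
      = (a - b) * (1 / (DD θ a y * DD θ b y)) := by
  have hA := (DD_pos ha0 ha1 θ y).ne'
  have hB := (DD_pos hb0 hb1 θ y).ne'
  have hEF : Real.exp (θ * y) * Real.exp (-(θ * y)) = 1 := by
    rw [← Real.exp_add]; simp
  field_simp
  unfold DD
  nlinarith [hEF]

/-- Pointwise F-integrand difference. -/
lemma F_int_diff {a b : ℝ} (ha0 : 0 < a) (ha1 : a < 1) (hb0 : 0 < b) (hb1 : b < 1)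
    (θ y : ℝ) :
    y * (a * Real.exp (θ * y) - (1 - a) * Real.exp (-(θ * y))) / DD θ a y
      - y * (b * Real.exp (θ * y) - (1 - b) * Real.exp (-(θ * y))) / DD θ b y
      = 2 * (a - b) * (y * (1 / (DD θ a y * DD θ b y))) := by
  have hA := (DD_pos ha0 ha1 θ y).ne'
  have hB := (DD_pos hb0 hb1 θ y).ne'
  have hEF : Real.exp (θ * y) * Real.exp (-(θ * y)) = 1 := by
    rw [← Real.exp_add]; simp
  field_simp
  unfold DD
  simp only [mul_comm y θ]
  linear_combination (2 * (a - b) * y) * hEF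

/-- Pointwise tilting deviation. -/
lemma G_int_dev {α : ℝ} (h0 : 0 < α) (h1 : α < 1) (θ y : ℝ) :
    α * Real.exp (θ * y) / DD θ α y - α
      = α * (1 - α) * (Real.exp (θ * y) - Real.exp (-(θ * y))) / DD θ α y := by
  have hA := (DD_pos h0 h1 θ y).ne'
  field_simp
  unfold DD
  ring

section Main

variable {θs αs θ α a b : ℝ}

lemma Gmap_eq : Gmap θs αs θ α = ∫ y, α * Real.exp (θ * y) / DD θ α y * mixDen θs αs y := rfl

lemma Fmap_eq : Fmap θs αs θ α =
    ∫ y, y * (α * Real.exp (θ * y) - (1 - α) * Real.exp (-(θ * y))) / DD θ α y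
      * mixDen θs αs y := rfl

lemma continuous_w (θ α : ℝ) (h0 : 0 < α) (h1 : α < 1) :
    Continuous (fun y => α * Real.exp (θ * y) / DD θ α y) := by
  refine Continuous.div ?_ (continuous_DD θ α) (fun y => (DD_pos h0 h1 θ y).ne')
  fun_prop

lemma abs_w_le (θ y : ℝ) {α : ℝ} (h0 : 0 < α) (h1 : α < 1) :
    |α * Real.exp (θ * y) / DD θ α y| ≤ 1 := by
  have hD := DD_pos h0 h1 θ y
  have hDe : DD θ α y = α * Real.exp (θ * y) + (1 - α) * Real.exp (-(θ * y)) := rfl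
  rw [abs_div, abs_of_pos hD, div_le_one hD, abs_of_pos (mul_pos h0 (Real.exp_pos _)), hDe]
  nlinarith [mul_pos (show (0:ℝ) < 1 - α by linarith) (Real.exp_pos (-(θ * y)))]

lemma integrable_w (h0 : 0 < αs) (h1 : αs < 1) (ha0 : 0 < α) (ha1 : α < 1) :
    Integrable (fun y => α * Real.exp (θ * y) / DD θ α y * mixDen θs αs y) :=
  integrable_bdd_mul_mixDen h0 h1 (continuous_w θ α ha0 ha1) (fun y => abs_w_le θ y ha0 ha1)

lemma integrable_f (h0 : 0 < αs) (h1 : αs < 1) (ha0 : 0 < α) (ha1 : α < 1) :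
    Integrable (fun y => y * (α * Real.exp (θ * y) - (1 - α) * Real.exp (-(θ * y)))
      / DD θ α y * mixDen θs αs y) := by
  have hc : Continuous (fun y =>
      (α * Real.exp (θ * y) - (1 - α) * Real.exp (-(θ * y))) / DD θ α y) := by
    refine Continuous.div ?_ (continuous_DD θ α) (fun y => (DD_pos ha0 ha1 θ y).ne')
    fun_prop
  have hb : ∀ y, |(α * Real.exp (θ * y) - (1 - α) * Real.exp (-(θ * y))) / DD θ α y| ≤ 1 := by
    intro y
    have hD := DD_pos ha0 ha1 θ y
    rw [abs_div, abs_of_pos hD, div_le_one hD]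
    exact abs_num_le_DD ha0 ha1 θ y
  refine (integrable_mul_bdd_mul_mixDen h0 h1 hc hb).congr
    (Filter.Eventually.of_forall fun y => by ring)

lemma integrable_K (h0 : 0 < αs) (h1 : αs < 1) (ha0 : 0 < a) (ha1 : a < 1)
    (hb0 : 0 < b) (hb1 : b < 1) :
    Integrable (fun y => 1 / (DD θ a y * DD θ b y) * mixDen θs αs y) := by
  have hca : (0:ℝ) < 2 * min a (1 - a) := by
    have := lt_min ha0 (show (0:ℝ) < 1 - a by linarith); linarith
  have hcb : (0:ℝ) < 2 * min b (1 - b) := by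
    have := lt_min hb0 (show (0:ℝ) < 1 - b by linarith); linarith
  have hc : Continuous (fun y => 1 / (DD θ a y * DD θ b y)) := by
    refine Continuous.div continuous_const ((continuous_DD θ a).mul (continuous_DD θ b))
      (fun y => (mul_pos (DD_pos ha0 ha1 θ y) (DD_pos hb0 hb1 θ y)).ne')
  have hbd : ∀ y, |1 / (DD θ a y * DD θ b y)| ≤
      1 / (2 * min a (1 - a) * (2 * min b (1 - b))) := by
    intro y
    have hDa := DD_pos ha0 ha1 θ y
    have hDb := DD_pos hb0 hb1 θ y
    rw [abs_of_pos (by positivity)]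
    apply one_div_le_one_div_of_le (by positivity)
    exact mul_le_mul (DD_ge ha0 ha1 θ y) (DD_ge hb0 hb1 θ y) hcb.le hDa.le
  exact integrable_bdd_mul_mixDen h0 h1 hc hbd

lemma integrable_yK (h0 : 0 < αs) (h1 : αs < 1) (ha0 : 0 < a) (ha1 : a < 1)
    (hb0 : 0 < b) (hb1 : b < 1) :
    Integrable (fun y => y * (1 / (DD θ a y * DD θ b y) * mixDen θs αs y)) := by
  have hca : (0:ℝ) < 2 * min a (1 - a) := by
    have := lt_min ha0 (show (0:ℝ) < 1 - a by linarith); linarith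
  have hcb : (0:ℝ) < 2 * min b (1 - b) := by
    have := lt_min hb0 (show (0:ℝ) < 1 - b by linarith); linarith
  have hc : Continuous (fun y => 1 / (DD θ a y * DD θ b y)) := by
    refine Continuous.div continuous_const ((continuous_DD θ a).mul (continuous_DD θ b))
      (fun y => (mul_pos (DD_pos ha0 ha1 θ y) (DD_pos hb0 hb1 θ y)).ne')
  have hbd : ∀ y, |1 / (DD θ a y * DD θ b y)| ≤
      1 / (2 * min a (1 - a) * (2 * min b (1 - b))) := by
    intro y
    have hDa := DD_pos ha0 ha1 θ y
    have hDb := DD_pos hb0 hb1 θ y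
    rw [abs_of_pos (by positivity)]
    apply one_div_le_one_div_of_le (by positivity)
    exact mul_le_mul (DD_ge ha0 ha1 θ y) (DD_ge hb0 hb1 θ y) hcb.le hDa.le
  exact integrable_mul_bdd_mul_mixDen h0 h1 hc hbd

lemma integrable_u (h0 : 0 < αs) (h1 : αs < 1) :
    Integrable (fun y => αs * (1 - αs) * (Real.exp (θ * y) - Real.exp (-(θ * y)))
      / DD θ αs y * mixDen θs αs y) := by
  have hm0 : 0 < min αs (1 - αs) := lt_min h0 (by linarith)
  have hc : Continuous (fun y =>
      αs * (1 - αs) * (Real.exp (θ * y) - Real.exp (-(θ * y))) / DD θ αs y) := by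
    refine Continuous.div ?_ (continuous_DD θ αs) (fun y => (DD_pos h0 h1 θ y).ne')
    fun_prop
  have hb : ∀ y, |αs * (1 - αs) * (Real.exp (θ * y) - Real.exp (-(θ * y))) / DD θ αs y|
      ≤ αs * (1 - αs) / min αs (1 - αs) := by
    intro y
    have hD := DD_pos h0 h1 θ y
    rw [abs_div, abs_of_pos hD, abs_mul,
      abs_of_pos (mul_pos h0 (show (0:ℝ) < 1 - αs by linarith)),
      div_le_div_iff₀ hD hm0]
    calc αs * (1 - αs) * |Real.exp (θ * y) - Real.exp (-(θ * y))| * min αs (1 - αs)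
        = αs * (1 - αs) * (|Real.exp (θ * y) - Real.exp (-(θ * y))| * min αs (1 - αs)) := by
          ring
      _ ≤ αs * (1 - αs) * DD θ αs y := by
          exact mul_le_mul_of_nonneg_left (abs_diff_le_DD h0 h1 θ y)
            (mul_pos h0 (show (0:ℝ) < 1 - αs by linarith)).le
      _ = αs * (1 - αs) * DD θ αs y := rfl
  exact integrable_bdd_mul_mixDen h0 h1 hc hb

/-- mixture density asymmetry -/
lemma mix_asym (hθs : 0 < θs) (hαs : 1 / 2 < αs) (y : ℝ) (hy : 0 < y) :
    mixDen θs αs (-y) < mixDen θs αs y := by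
  have h1 : stdGauss (y + θs) < stdGauss (y - θs) := stdGauss_lt (by nlinarith)
  have h2 : stdGauss (-y - θs) = stdGauss (y + θs) := by
    rw [show -y - θs = -(y + θs) by ring, stdGauss_neg]
  have h3 : stdGauss (-y + θs) = stdGauss (y - θs) := by
    rw [show -y + θs = -(y - θs) by ring, stdGauss_neg]
  show αs * stdGauss (-y - θs) + (1 - αs) * stdGauss (-y + θs) <
    αs * stdGauss (y - θs) + (1 - αs) * stdGauss (y + θs)
  rw [h2, h3]
  nlinarith

/-- denominator asymmetry -/
lemma DD_asym (hθ : θ < 0) (hα : 1 / 2 < α) (y : ℝ) (hy : 0 < y) :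
    DD θ α y < DD θ α (-y) := by
  have h1 : Real.exp (θ * y) < Real.exp (-(θ * y)) :=
    Real.exp_lt_exp.2 (by nlinarith)
  show α * Real.exp (θ * y) + (1 - α) * Real.exp (-(θ * y)) <
    α * Real.exp (θ * -y) + (1 - α) * Real.exp (-(θ * -y))
  rw [show θ * -y = -(θ * y) by ring, neg_neg]
  nlinarith

end Main

section Main2

variable {θs αs θ a : ℝ}

/-- The self-consistency gap: `G(θ, αs) < αs` for `θ < 0`. -/
lemma G_lt_self (hθs : 0 < θs) (hθ : θ < 0) (hαs : 1 / 2 < αs) (hαs1 : αs < 1) :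
    Gmap θs αs θ αs < αs := by
  have hαs0 : 0 < αs := by linarith
  have hu_int := integrable_u (θ := θ) (θs := θs) hαs0 hαs1
  have key : Gmap θs αs θ αs - αs =
      ∫ y, αs * (1 - αs) * (Real.exp (θ * y) - Real.exp (-(θ * y)))
        / DD θ αs y * mixDen θs αs y := by
    have e1 : Gmap θs αs θ αs - αs
        = (∫ y, αs * Real.exp (θ * y) / DD θ αs y * mixDen θs αs y)
          - ∫ y, αs * mixDen θs αs y := by
      rw [Gmap_eq, integral_const_mul, integral_mixDen, mul_one]
    rw [e1, ← integral_sub (integrable_w hαs0 hαs1 hαs0 hαs1)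
      (integrable_mixDen.const_mul αs)]
    refine integral_congr_ae (Filter.Eventually.of_forall fun y => ?_)
    have := G_int_dev hαs0 hαs1 θ y
    calc αs * Real.exp (θ * y) / DD θ αs y * mixDen θs αs y - αs * mixDen θs αs y
        = (αs * Real.exp (θ * y) / DD θ αs y - αs) * mixDen θs αs y := by ring
      _ = _ := by rw [this]
  have hneg : (∫ y, αs * (1 - αs) * (Real.exp (θ * y) - Real.exp (-(θ * y)))
      / DD θ αs y * mixDen θs αs y) < 0 := by
    have hpos := integral_pos_of_sym hu_int.neg (fun y hy => ?_)
    · simp only [Pi.neg_apply] at hpos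
      rw [integral_neg] at hpos; linarith
    -- pointwise strict negativity of the symmetrized integrand
    simp only [Pi.neg_apply]
    rw [show θ * -y = -(θ * y) by ring, neg_neg]
    have hE : Real.exp (θ * y) < Real.exp (-(θ * y)) := Real.exp_lt_exp.2 (by nlinarith)
    have hP := DD_pos hαs0 hαs1 θ y
    have hQ := DD_pos hαs0 hαs1 θ (-y)
    have hPQ : DD θ αs y < DD θ αs (-y) := DD_asym hθ hαs y hy
    have hmq := mixDen_pos (θs := θs) hαs0 hαs1 (-y)
    have hmp := mix_asym hθs hαs y hy
    have hc : (0:ℝ) < αs * (1 - αs) := mul_pos hαs0 (by linarith)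
    have hq : mixDen θs αs (-y) / DD θ αs (-y) < mixDen θs αs y / DD θ αs y := by
      rw [div_lt_div_iff₀ hQ hP]
      nlinarith
    have hkey : αs * (1 - αs) * (Real.exp (θ * y) - Real.exp (-(θ * y)))
          / DD θ αs y * mixDen θs αs y
        + αs * (1 - αs) * (Real.exp (-(θ * y)) - Real.exp (θ * y))
          / DD θ αs (-y) * mixDen θs αs (-y) < 0 := by
      have e2 : αs * (1 - αs) * (Real.exp (θ * y) - Real.exp (-(θ * y)))
            / DD θ αs y * mixDen θs αs y
          + αs * (1 - αs) * (Real.exp (-(θ * y)) - Real.exp (θ * y))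
            / DD θ αs (-y) * mixDen θs αs (-y)
          = αs * (1 - αs) * (Real.exp (-(θ * y)) - Real.exp (θ * y))
            * (mixDen θs αs (-y) / DD θ αs (-y) - mixDen θs αs y / DD θ αs y) := by
        ring
      rw [e2]
      have h6 : (0:ℝ) < αs * (1 - αs) * (Real.exp (-(θ * y)) - Real.exp (θ * y)) := by
        nlinarith
      nlinarith
    linarith [hkey]
  linarith [key, hneg]

end Main2

section Main3

variable {θs αs θ a : ℝ}

lemma Gdiff_eq (hαs0 : 0 < αs) (hαs1 : αs < 1) (ha0 : 0 < a) (ha1 : a < 1) :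
    Gmap θs αs θ a - Gmap θs αs θ αs
      = (a - αs) * ∫ y, 1 / (DD θ a y * DD θ αs y) * mixDen θs αs y := by
  rw [Gmap_eq, Gmap_eq, ← integral_sub (integrable_w hαs0 hαs1 ha0 ha1)
    (integrable_w hαs0 hαs1 hαs0 hαs1), ← integral_const_mul]
  refine integral_congr_ae (Filter.Eventually.of_forall fun y => ?_)
  have := G_int_diff ha0 ha1 hαs0 hαs1 θ y
  calc a * Real.exp (θ * y) / DD θ a y * mixDen θs αs y
        - αs * Real.exp (θ * y) / DD θ αs y * mixDen θs αs y
      = (a * Real.exp (θ * y) / DD θ a y - αs * Real.exp (θ * y) / DD θ αs y)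
        * mixDen θs αs y := by ring
    _ = (a - αs) * (1 / (DD θ a y * DD θ αs y)) * mixDen θs αs y := by rw [this]
    _ = (a - αs) * (1 / (DD θ a y * DD θ αs y) * mixDen θs αs y) := by ring

lemma I_pos (hαs0 : 0 < αs) (hαs1 : αs < 1) (ha0 : 0 < a) (ha1 : a < 1) :
    0 < ∫ y, 1 / (DD θ a y * DD θ αs y) * mixDen θs αs y := by
  refine integral_pos_of_pos (integrable_K hαs0 hαs1 ha0 ha1 hαs0 hαs1) (fun y => ?_)
  exact mul_pos (one_div_pos.2 (mul_pos (DD_pos ha0 ha1 θ y) (DD_pos hαs0 hαs1 θ y)))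
    (mixDen_pos hαs0 hαs1 y)

lemma J_pos (hθs : 0 < θs) (hθ : θ < 0) (hαs : 1 / 2 < αs) (hαs1 : αs < 1)
    (ha : 1 / 2 < a) (ha1 : a < 1) :
    0 < ∫ y, y * (1 / (DD θ a y * DD θ αs y) * mixDen θs αs y) := by
  have hαs0 : 0 < αs := by linarith
  have ha0 : 0 < a := by linarith
  refine integral_pos_of_sym (integrable_yK hαs0 hαs1 ha0 ha1 hαs0 hαs1)
    (fun y hy => ?_)
  have hPa := DD_pos ha0 ha1 θ y
  have hQa := DD_pos ha0 ha1 θ (-y)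
  have hPs := DD_pos hαs0 hαs1 θ y
  have hQs := DD_pos hαs0 hαs1 θ (-y)
  have h1 : DD θ a y < DD θ a (-y) := DD_asym hθ ha y hy
  have h2 : DD θ αs y < DD θ αs (-y) := DD_asym hθ hαs y hy
  have hmq := mixDen_pos (θs := θs) hαs0 hαs1 (-y)
  have hmp := mix_asym hθs hαs y hy
  have hprod : DD θ a y * DD θ αs y < DD θ a (-y) * DD θ αs (-y) := by nlinarith
  have hKK : 1 / (DD θ a (-y) * DD θ αs (-y)) * mixDen θs αs (-y)
      < 1 / (DD θ a y * DD θ αs y) * mixDen θs αs y := by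
    rw [one_div_mul_eq_div, one_div_mul_eq_div, div_lt_div_iff₀ (by positivity) (by positivity)]
    have := mul_lt_mul'' hmp hprod hmq.le (mul_pos hPa hPs).le
    linarith
  have e : y * (1 / (DD θ a y * DD θ αs y) * mixDen θs αs y)
      + -y * (1 / (DD θ a (-y) * DD θ αs (-y)) * mixDen θs αs (-y))
      = y * (1 / (DD θ a y * DD θ αs y) * mixDen θs αs y
        - 1 / (DD θ a (-y) * DD θ αs (-y)) * mixDen θs αs (-y)) := by ring
  rw [e]
  exact mul_pos hy (by linarith)

lemma Fdiff_eq (hαs0 : 0 < αs) (hαs1 : αs < 1) (ha0 : 0 < a) (ha1 : a < 1) :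
    Fmap θs αs θ a - Fmap θs αs θ αs
      = 2 * (a - αs) * ∫ y, y * (1 / (DD θ a y * DD θ αs y) * mixDen θs αs y) := by
  rw [Fmap_eq, Fmap_eq, ← integral_sub (integrable_f hαs0 hαs1 ha0 ha1)
    (integrable_f hαs0 hαs1 hαs0 hαs1), ← integral_const_mul]
  refine integral_congr_ae (Filter.Eventually.of_forall fun y => ?_)
  have := F_int_diff ha0 ha1 hαs0 hαs1 θ y
  calc y * (a * Real.exp (θ * y) - (1 - a) * Real.exp (-(θ * y))) / DD θ a y
        * mixDen θs αs y
      - y * (αs * Real.exp (θ * y) - (1 - αs) * Real.exp (-(θ * y))) / DD θ αs y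
        * mixDen θs αs y
      = (y * (a * Real.exp (θ * y) - (1 - a) * Real.exp (-(θ * y))) / DD θ a y
        - y * (αs * Real.exp (θ * y) - (1 - αs) * Real.exp (-(θ * y))) / DD θ αs y)
        * mixDen θs αs y := by ring
    _ = 2 * (a - αs) * (y * (1 / (DD θ a y * DD θ αs y))) * mixDen θs αs y := by rw [this]
    _ = 2 * (a - αs) * (y * (1 / (DD θ a y * DD θ αs y) * mixDen θs αs y)) := by ring

end Main3


/-- the derivative of the entropic OT loss strictly dominates that of
the negative log-likelihood on the negative half-line: for `θ < 0` and any tilted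
weight `a ∈ (0,1)` with `G(θ, a) = α*`, one has `F(θ, a) > F(θ, α*)`. -/
theorem F_tilted_gt_F_on_negative_halfline
    (θs αs : ℝ) (hθs : 0 < θs) (hαs : 1 / 2 < αs) (hαs1 : αs < 1) :
    ∀ θ < (0 : ℝ), ∀ a ∈ Set.Ioo (0 : ℝ) 1,
      Gmap θs αs θ a = αs → Fmap θs αs θ αs < Fmap θs αs θ a := by
  intro θ hθ a ha hGa
  obtain ⟨ha0, ha1⟩ := ha
  have hαs0 : 0 < αs := by linarith
  have hGs := G_lt_self hθs hθ hαs hαs1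
  have hGd := Gdiff_eq (θs := θs) (θ := θ) hαs0 hαs1 ha0 ha1
  rw [hGa] at hGd
  have hI := I_pos (θs := θs) (θ := θ) hαs0 hαs1 ha0 ha1
  have haαs : αs < a := by
    rcases mul_pos_iff.1 (show 0 < (a - αs) *
        ∫ y, 1 / (DD θ a y * DD θ αs y) * mixDen θs αs y by linarith) with h | h
    · linarith [h.1]
    · linarith [h.2]
  have hJ := J_pos hθs hθ hαs hαs1 (by linarith) ha1
  have hFd := Fdiff_eq (θs := θs) (θ := θ) hαs0 hαs1 ha0 ha1
  nlinarith
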